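/- Let n ≥ 2 and let J ⊆ {1,…,n−1} be a subset of size m. The number of maximal transitive partitions p of the transitive tournament on n vertices such that J ⊆ Des(p) equals the Catalan number C_{n−m−1} if J is sparse (contains no two consecutive integers), and equals 0 otherwise. -/

import Mathlib

/-- The edge set of the transitive tournament on `n` vertices (labelled `0, …, n-1`):
ordered pairs `(i, j)` with `i < j`. -/
abbrev TournEdge (n : ℕ) := {p : Fin n × Fin n // p.1 < p.2}

/-- The edge `(a, b)` of the transitive tournament, for `a < b`. -/
def te {n : ℕ} (a b : Fin n) (h : a < b) : TournEdge n := ⟨(a, b), h⟩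

/-- The edge from vertex `i` to vertex `i + 1`. -/
def consecEdge {n : ℕ} (i : ℕ) (h : i + 1 < n) : TournEdge n :=
  te ⟨i, Nat.lt_of_succ_lt h⟩ ⟨i + 1, h⟩ (Fin.mk_lt_mk.mpr (Nat.lt_succ_self i))

/-- A partition of the edge set of the transitive tournament (encoded as a setoid,
whose classes are the nonempty blocks) is transitive if for all `i < j < k` the
edge `(i,k)` lies in the same block as `(i,j)` or in the same block as `(j,k)`. -/
def IsTransitivePartition {n : ℕ} (S : Setoid (TournEdge n)) : Prop :=
  ∀ (i j k : Fin n) (hij : i < j) (hjk : j < k),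
    S.r (te i k (hij.trans hjk)) (te i j hij) ∨
      S.r (te i k (hij.trans hjk)) (te j k hjk)

/-- The edge `e` forms a singleton block of the partition encoded by `S`. -/
def IsSingletonBlock {n : ℕ} (S : Setoid (TournEdge n)) (e : TournEdge n) : Prop :=
  ∀ f, S.r f e → f = e

/-- A set of natural numbers is sparse if it contains no two consecutive integers. -/
def SparseSet (J : Finset ℕ) : Prop := ∀ i ∈ J, i + 1 ∉ J

open Finset

/-- Labelling functions encoding maximal transitive partitions with
singleton constraints at `J`. -/
def NGood (n : ℕ) (J : Finset ℕ) (ℓ : ℕ → ℕ → ℕ) : Prop :=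
  (∀ a b, ¬(a < b ∧ b < n) → ℓ a b = 0) ∧
  (∀ i, i + 1 < n → ℓ i (i + 1) = i) ∧
  (∀ i j k, i < j → j < k → k < n → ℓ i k = ℓ i j ∨ ℓ i k = ℓ j k) ∧
  (∀ i ∈ J, ∀ a b, a < b → b < n → ℓ a b = i → a = i ∧ b = i + 1)

abbrev EL (n : ℕ) (J : Finset ℕ) := {ℓ : ℕ → ℕ → ℕ // NGood n J ℓ}

theorem NGood.bounds {n : ℕ} {J : Finset ℕ} {ℓ : ℕ → ℕ → ℕ} (h : NGood n J ℓ) :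
    ∀ b a, a < b → b < n → a ≤ ℓ a b ∧ ℓ a b < b := by
  intro b
  induction b using Nat.strong_induction_on with
  | _ b ih =>
    intro a hab hbn
    rcases eq_or_lt_of_le (show a + 1 ≤ b from hab) with he | hlt
    · have he' : b = a + 1 := he.symm
      subst he'
      rw [h.2.1 a hbn]
      omega
    · obtain ⟨c, rfl⟩ : ∃ c, b = c + 1 := ⟨b - 1, by omega⟩
      rcases h.2.2.1 a c (c+1) (by omega) (by omega) hbn with hc | hc
      · have := ih c (by omega) a (by omega) (by omega)
        omega
      · rw [hc, h.2.1 c hbn]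
        omega

theorem NGood.straddle {n : ℕ} {J : Finset ℕ} {ℓ : ℕ → ℕ → ℕ} (h : NGood n J ℓ)
    {a₀ b₀ t : ℕ} (hb₀ : b₀ < n) (hv : ℓ a₀ b₀ = t) (ha₀t : a₀ ≤ t) (htb₀ : t < b₀) :
    ∀ a b, a₀ ≤ a → a ≤ t → t < b → b ≤ b₀ → ℓ a b = t := by
  have claim1 : ∀ b, t < b → b ≤ b₀ → ℓ a₀ b = t := by
    intro b htb hbb
    rcases eq_or_lt_of_le hbb with he | hlt
    · rw [he]; exact hv
    · rcases h.2.2.1 a₀ b b₀ (by omega) hlt hb₀ with hc | hc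
      · omega
      · have := h.bounds b₀ b hlt hb₀
        omega
  intro a b haa hat htb hbb
  have h1 : ℓ a₀ b = t := claim1 b htb hbb
  rcases eq_or_lt_of_le haa with he | hlt
  · rw [← he]; exact h1
  · rcases h.2.2.1 a₀ a b hlt (by omega) (by omega) with hc | hc
    · have := h.bounds a a₀ hlt (by omega)
      omega
    · omega

instance EL.finite (n : ℕ) (J : Finset ℕ) : Finite (EL n J) := by
  have key : ∀ (ℓ : EL n J) (a b : ℕ), ℓ.1 a b < n + 1 := by
    intro ℓ a b
    by_cases hc : a < b ∧ b < n
    · have := ℓ.2.bounds b a hc.1 hc.2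
      omega
    · rw [ℓ.2.1 a b hc]; omega
  apply Finite.of_injective
    (fun ℓ : EL n J => (fun a b : Fin n => (⟨ℓ.1 a b, key ℓ a b⟩ : Fin (n+1))))
  intro ℓ m hlm
  apply Subtype.ext
  funext a b
  by_cases hc : a < b ∧ b < n
  · have ha : a < n := by omega
    have := congrFun (congrFun hlm ⟨a, ha⟩) ⟨b, hc.2⟩
    simpa using this
  · rw [ℓ.2.1 a b hc, m.2.1 a b hc]

theorem EL_card_small (n : ℕ) (hn : n ≤ 2) (J : Finset ℕ) : Nat.card (EL n J) = 1 := by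
  have hgood : NGood n J (fun _ _ => 0) := by
    refine ⟨fun _ _ _ => rfl, ?_, ?_, ?_⟩
    · intro i hi; show (0:ℕ) = i; omega
    · intro i j k hij hjk hkn; omega
    · intro i _ a b hab hbn h0
      have h0' : (0:ℕ) = i := h0
      omega
  have huniq : ∀ ℓ : EL n J, ℓ = ⟨fun _ _ => 0, hgood⟩ := by
    intro ℓ
    apply Subtype.ext
    funext a b
    by_cases hc : a < b ∧ b < n
    · have hb : b = a + 1 := by omega
      have ha : a = 0 := by omega
      subst hb; subst ha
      exact ℓ.2.2.1 0 (by omega)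
    · exact ℓ.2.1 a b hc
  haveI : Nonempty (EL n J) := ⟨⟨fun _ _ => 0, hgood⟩⟩
  haveI : Subsingleton (EL n J) := ⟨fun a b => (huniq a).trans (huniq b).symm⟩
  exact Nat.card_unique

theorem EL_empty_of_not_sparse (n : ℕ) (J : Finset ℕ) (hJn : J ⊆ range (n-1))
    {i : ℕ} (hi : i ∈ J) (hi1 : i + 1 ∈ J) : IsEmpty (EL n J) := by
  constructor
  rintro ⟨ℓ, hℓ⟩
  have h3 : i + 2 < n := by
    have := mem_range.mp (hJn hi1); omega
  rcases hℓ.2.2.1 i (i+1) (i+2) (by omega) (by omega) h3 with hc | hc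
  · rw [hℓ.2.1 i (by omega)] at hc
    have := hℓ.2.2.2 i hi i (i+2) (by omega) h3 hc
    omega
  · have h1 : ℓ (i+1) (i+2) = i + 1 := hℓ.2.1 (i+1) h3
    rw [h1] at hc
    have := hℓ.2.2.2 (i+1) hi1 i (i+2) (by omega) h3 hc
    omega
def J1 (J : Finset ℕ) (t : ℕ) : Finset ℕ := J.filter (· < t)
def J2 (J : Finset ℕ) (t : ℕ) : Finset ℕ :=
  (J.filter (fun i => t < i)).image (fun i => i - (t+1))

/-- Combine labelling functions on the two halves into one on `n` vertices. -/
def combineL (n t : ℕ) (ℓ₁ ℓ₂ : ℕ → ℕ → ℕ) : ℕ → ℕ → ℕ :=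
  fun a b => if a < b ∧ b < n then
    (if b ≤ t then ℓ₁ a b else if t < a then ℓ₂ (a - (t+1)) (b - (t+1)) + (t+1) else t)
  else 0

theorem combineL_left {n t : ℕ} {ℓ₁ ℓ₂ : ℕ → ℕ → ℕ} {a b : ℕ}
    (hab : a < b) (hbt : b ≤ t) (htn : t < n - 1) :
    combineL n t ℓ₁ ℓ₂ a b = ℓ₁ a b := by
  rw [combineL, if_pos ⟨hab, by omega⟩, if_pos hbt]

theorem combineL_mid {n t : ℕ} {ℓ₁ ℓ₂ : ℕ → ℕ → ℕ} {a b : ℕ}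
    (hat : a ≤ t) (htb : t < b) (hbn : b < n) :
    combineL n t ℓ₁ ℓ₂ a b = t := by
  rw [combineL, if_pos ⟨by omega, hbn⟩, if_neg (by omega), if_neg (by omega)]

theorem combineL_right {n t : ℕ} {ℓ₁ ℓ₂ : ℕ → ℕ → ℕ} {a b : ℕ}
    (hta : t < a) (hab : a < b) (hbn : b < n) :
    combineL n t ℓ₁ ℓ₂ a b = ℓ₂ (a - (t+1)) (b - (t+1)) + (t+1) := by
  rw [combineL, if_pos ⟨hab, hbn⟩, if_neg (by omega), if_pos hta]

theorem NGood_combine {n t : ℕ} {J : Finset ℕ} {ℓ₁ ℓ₂ : ℕ → ℕ → ℕ}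
    (hJn : J ⊆ Finset.range (n-1)) (ht : t < n - 1) (htJ : t ∉ J)
    (h₁ : NGood (t+1) (J1 J t) ℓ₁) (h₂ : NGood (n-1-t) (J2 J t) ℓ₂) :
    NGood n J (combineL n t ℓ₁ ℓ₂) := by
  refine ⟨?_, ?_, ?_, ?_⟩
  · intro a b h
    rw [combineL, if_neg h]
  · intro i hi
    rcases le_or_gt (i+1) t with h | h
    · rw [combineL_left (by omega) h ht]
      exact h₁.2.1 i (by omega)
    · rcases lt_or_ge t i with h' | h'
      · rw [combineL_right h' (by omega) hi]
        have e1 : (i+1) - (t+1) = (i - (t+1)) + 1 := by omega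
        rw [e1, h₂.2.1 _ (by omega)]
        omega
      · rw [combineL_mid h' (by omega) hi]
        omega
  · intro i j k hij hjk hkn
    rcases le_or_gt k t with hk | hk
    · rw [combineL_left (by omega) hk ht, combineL_left hij (by omega) ht,
        combineL_left hjk hk ht]
      exact h₁.2.2.1 i j k hij hjk (by omega)
    · rcases lt_or_ge t i with hi | hi
      · rw [combineL_right (by omega) (by omega) hkn, combineL_right hi hij (by omega),
          combineL_right (by omega) hjk hkn]
        rcases h₂.2.2.1 (i-(t+1)) (j-(t+1)) (k-(t+1)) (by omega) (by omega) (by omega)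
          with hc | hc
        · left; omega
        · right; omega
      · rcases le_or_gt j t with hj | hj
        · right
          rw [combineL_mid hi hk hkn, combineL_mid hj hk hkn]
        · left
          rw [combineL_mid hi hk hkn, combineL_mid hi hj (by omega)]
  · intro i hiJ a b hab hbn hval
    rcases le_or_gt b t with hb | hb
    · rw [combineL_left hab hb ht] at hval
      have hbd := h₁.bounds b a hab (by omega)
      have hi1 : i ∈ J1 J t := Finset.mem_filter.mpr ⟨hiJ, by omega⟩
      exact h₁.2.2.2 i hi1 a b hab (by omega) hval
    · rcases lt_or_ge t a with ha | ha
      · rw [combineL_right ha hab hbn] at hval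
        have hi' : i - (t+1) ∈ J2 J t :=
          Finset.mem_image.mpr ⟨i, Finset.mem_filter.mpr ⟨hiJ, by omega⟩, rfl⟩
        have := h₂.2.2.2 (i - (t+1)) hi' (a-(t+1)) (b-(t+1)) (by omega) (by omega)
          (by omega)
        omega
      · rw [combineL_mid ha hb hbn] at hval
        exact absurd (hval ▸ hiJ) htJ
def split1 (t : ℕ) (ℓ : ℕ → ℕ → ℕ) : ℕ → ℕ → ℕ :=
  fun a b => if a < b ∧ b ≤ t then ℓ a b else 0

def split2 (n t : ℕ) (ℓ : ℕ → ℕ → ℕ) : ℕ → ℕ → ℕ :=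
  fun a b => if a < b ∧ b < n - 1 - t then ℓ (a + (t+1)) (b + (t+1)) - (t+1) else 0

theorem NGood_split1 {n t : ℕ} {J : Finset ℕ} {ℓ : ℕ → ℕ → ℕ}
    (hℓ : NGood n J ℓ) (ht : t < n - 1) : NGood (t+1) (J1 J t) (split1 t ℓ) := by
  refine ⟨?_, ?_, ?_, ?_⟩
  · intro a b h
    rw [split1, if_neg (by omega)]
  · intro i hi
    rw [split1, if_pos ⟨by omega, by omega⟩]
    exact hℓ.2.1 i (by omega)
  · intro i j k hij hjk hkn
    rw [split1, split1, split1, if_pos ⟨by omega, by omega⟩, if_pos ⟨hij, by omega⟩,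
      if_pos ⟨hjk, by omega⟩]
    exact hℓ.2.2.1 i j k hij hjk (by omega)
  · intro i hi a b hab hbn hval
    rw [split1, if_pos ⟨hab, by omega⟩] at hval
    obtain ⟨hiJ, -⟩ := Finset.mem_filter.mp hi
    exact hℓ.2.2.2 i hiJ a b hab (by omega) hval

theorem NGood_split2 {n t : ℕ} {J : Finset ℕ} {ℓ : ℕ → ℕ → ℕ}
    (hℓ : NGood n J ℓ) (ht : t < n - 1) : NGood (n-1-t) (J2 J t) (split2 n t ℓ) := by
  refine ⟨?_, ?_, ?_, ?_⟩
  · intro a b h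
    rw [split2, if_neg (by omega)]
  · intro i hi
    rw [split2, if_pos ⟨by omega, hi⟩, show (i+1)+(t+1) = (i+(t+1))+1 from by omega,
      hℓ.2.1 _ (by omega)]
    omega
  · intro i j k hij hjk hkn
    rw [split2, split2, split2, if_pos ⟨by omega, hkn⟩, if_pos ⟨hij, by omega⟩,
      if_pos ⟨hjk, hkn⟩]
    rcases hℓ.2.2.1 (i+(t+1)) (j+(t+1)) (k+(t+1)) (by omega) (by omega) (by omega)
      with hc | hc
    · left; omega
    · right; omega
  · intro i hi a b hab hbn hval
    obtain ⟨i₀, hi₀, rfl⟩ := Finset.mem_image.mp hi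
    obtain ⟨hi₀J, hti₀⟩ := Finset.mem_filter.mp hi₀
    rw [split2, if_pos ⟨hab, hbn⟩] at hval
    have hbd := hℓ.bounds (b+(t+1)) (a+(t+1)) (by omega) (by omega)
    have hv' : ℓ (a+(t+1)) (b+(t+1)) = i₀ := by omega
    have := hℓ.2.2.2 i₀ hi₀J (a+(t+1)) (b+(t+1)) (by omega) (by omega) hv'
    omega

theorem combine_split {n : ℕ} {J : Finset ℕ} {ℓ : ℕ → ℕ → ℕ}
    (hℓ : NGood n J ℓ) (hn : 2 ≤ n) :
    combineL n (ℓ 0 (n-1)) (split1 (ℓ 0 (n-1)) ℓ) (split2 n (ℓ 0 (n-1)) ℓ) = ℓ := by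
  set t := ℓ 0 (n-1) with hv
  have htb := hℓ.bounds (n-1) 0 (by omega) (by omega)
  funext a b
  by_cases h : a < b ∧ b < n
  · rcases le_or_gt b t with hb | hb
    · rw [combineL_left h.1 hb (by omega), split1, if_pos ⟨h.1, hb⟩]
    · rcases lt_or_ge t a with ha | ha
      · rw [combineL_right ha h.1 h.2, split2,
          if_pos (⟨by omega, by omega⟩ : a - (t+1) < b - (t+1) ∧ b - (t+1) < n - 1 - t),
          show a - (t+1) + (t+1) = a from by omega, show b - (t+1) + (t+1) = b from by omega]
        have := hℓ.bounds b a h.1 h.2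
        omega
      · rw [combineL_mid ha hb h.2]
        exact (hℓ.straddle (by omega) hv.symm (by omega) (by omega) a b (by omega) ha hb
          (by omega)).symm
  · rw [combineL, if_neg h, hℓ.1 a b h]
theorem EL_card_rec (n : ℕ) (hn : 3 ≤ n) (J : Finset ℕ) (hJn : J ⊆ Finset.range (n-1)) :
    Nat.card (EL n J) = ∑ t ∈ (Finset.range (n-1)) \ J,
      Nat.card (EL (t+1) (J1 J t)) * Nat.card (EL (n-1-t) (J2 J t)) := by
  set s : Finset ℕ := (Finset.range (n-1)) \ J with hs
  have hmem : ∀ t, t ∈ s ↔ (t < n - 1 ∧ t ∉ J) := by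
    intro t; rw [hs, Finset.mem_sdiff, Finset.mem_range]
  -- the combining map
  set G : (Σ t : {t // t ∈ s}, EL (t.1+1) (J1 J t.1) × EL (n-1-t.1) (J2 J t.1)) → EL n J :=
    fun x => ⟨combineL n x.1.1 x.2.1.1 x.2.2.1,
      NGood_combine hJn ((hmem x.1.1).mp x.1.2).1 ((hmem x.1.1).mp x.1.2).2
        x.2.1.2 x.2.2.2⟩ with hG
  have hGbij : Function.Bijective G := by
    constructor
    · rintro ⟨⟨t, ht⟩, ⟨ℓ₁, h₁⟩, ⟨ℓ₂, h₂⟩⟩ ⟨⟨u, hu⟩, ⟨m₁, m₂h⟩, ⟨m₂, h₂'⟩⟩ hxy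
      have hfun : combineL n t ℓ₁ ℓ₂ = combineL n u m₁ m₂ := congrArg Subtype.val hxy
      obtain ⟨htn, htJ⟩ := (hmem t).mp ht
      obtain ⟨hun, huJ⟩ := (hmem u).mp hu
      have htu : t = u := by
        have h1 : combineL n t ℓ₁ ℓ₂ 0 (n-1) = t := combineL_mid (by omega) (by omega) (by omega)
        have h2 : combineL n u m₁ m₂ 0 (n-1) = u := combineL_mid (by omega) (by omega) (by omega)
        rw [hfun] at h1; omega
      subst htu
      dsimp only at h₁ m₂h h₂ h₂' hfun
      have e1 : ℓ₁ = m₁ := by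
        funext a b
        by_cases hc : a < b ∧ b ≤ t
        · have := congrFun (congrFun hfun a) b
          rwa [combineL_left hc.1 hc.2 htn, combineL_left hc.1 hc.2 htn] at this
        · rw [h₁.1 a b (by omega), m₂h.1 a b (by omega)]
      have e2 : ℓ₂ = m₂ := by
        funext a b
        by_cases hc : a < b ∧ b < n - 1 - t
        · have := congrFun (congrFun hfun (a + (t+1))) (b + (t+1))
          rw [combineL_right (by omega) (by omega) (by omega),
            combineL_right (by omega) (by omega) (by omega)] at this
          simp only [Nat.add_sub_cancel] at this
          omega
        · rw [h₂.1 a b (by omega), h₂'.1 a b (by omega)]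
      subst e1; subst e2
      rfl
    · rintro ⟨ℓ, hℓ⟩
      set t := ℓ 0 (n-1) with hv
      have htb := hℓ.bounds (n-1) 0 (by omega) (by omega)
      have htn : t < n - 1 := htb.2
      have htJ : t ∉ J := by
        intro hmemJ
        have := hℓ.2.2.2 t hmemJ 0 (n-1) (by omega) (by omega) rfl
        omega
      refine ⟨⟨⟨t, (hmem t).mpr ⟨htn, htJ⟩⟩,
        ⟨split1 t ℓ, NGood_split1 hℓ htn⟩, ⟨split2 n t ℓ, NGood_split2 hℓ htn⟩⟩, ?_⟩
      exact Subtype.ext (combine_split hℓ (by omega))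
  have hcard := Nat.card_eq_of_bijective G hGbij
  rw [← hcard]
  haveI : ∀ (i : {t // t ∈ s}), Fintype (EL (i.1+1) (J1 J i.1) × EL (n-1-i.1) (J2 J i.1)) :=
    fun i => Fintype.ofFinite _
  rw [Nat.card_eq_fintype_card, Fintype.card_sigma]
  rw [← Finset.sum_coe_sort s]
  congr 1
  funext i
  rw [← Nat.card_eq_fintype_card, Nat.card_prod]
theorem EL_card : ∀ n : ℕ, ∀ J ⊆ Finset.range (n-1), SparseSet J →
    Nat.card (EL n J) = catalan (n - 1 - J.card) := by
  intro n
  induction n using Nat.strong_induction_on with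
  | _ n ih =>
    intro J hJn hsp
    rcases le_or_gt n 2 with hn | hn
    · rw [EL_card_small n hn J]
      have h01 : n - 1 - J.card = 0 ∨ n - 1 - J.card = 1 := by omega
      rcases h01 with h | h <;> rw [h] <;> simp
    · -- n ≥ 3
      rw [EL_card_rec n (by omega) J hJn]
      set m := J.card with hm
      set s : Finset ℕ := Finset.range (n-1) \ J with hs
      have hmem : ∀ t, t ∈ s ↔ (t < n - 1 ∧ t ∉ J) := by
        intro t; rw [hs, Finset.mem_sdiff, Finset.mem_range]
      set g : ℕ → ℕ := fun t => ((Finset.range t).filter (fun i => i ∉ J)).card with hg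
      have F0 : ∀ t, ((Finset.range t).filter (fun i => i ∈ J)).card + g t = t := by
        intro t
        rw [hg]
        rw [Finset.card_filter_add_card_filter_not (p := fun i => i ∈ J),
          Finset.card_range]
      have F1 : ∀ t, (J1 J t).card + g t = t := by
        intro t
        have : J1 J t = (Finset.range t).filter (fun i => i ∈ J) := by
          ext i
          simp only [J1, Finset.mem_filter, Finset.mem_range]
          tauto
        rw [this]; exact F0 t
      have F1' : ∀ t, (J1 J t).card ≤ m := fun t =>
        Finset.card_le_card (Finset.filter_subset _ _)
      have F2 : ∀ t ∈ s, (J2 J t).card + (J1 J t).card = m := by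
        intro t hts
        obtain ⟨htn, htJ⟩ := (hmem t).mp hts
        have hinj : (J2 J t).card = (J.filter (fun i => t < i)).card := by
          apply Finset.card_image_of_injOn
          intro i hi j hj hij
          simp only [Finset.mem_coe, Finset.mem_filter] at hi hj
          have hij' : i - (t+1) = j - (t+1) := hij
          omega
        have hneg : J.filter (fun i => ¬ i < t) = J.filter (fun i => t < i) := by
          ext i
          simp only [Finset.mem_filter]
          constructor
          · rintro ⟨hiJ, h⟩
            refine ⟨hiJ, ?_⟩
            have hne : i ≠ t := fun he => htJ (he ▸ hiJ)
            omega
          · rintro ⟨hiJ, h⟩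
            exact ⟨hiJ, by omega⟩
        rw [hinj, ← hneg, Nat.add_comm]
        exact Finset.card_filter_add_card_filter_not (p := fun i => i < t)
      have F3 : s.card = n - 1 - m := by
        rw [hs, Finset.card_sdiff_of_subset hJn, Finset.card_range, hm]
      have F4 : ∀ t ∈ s, g t < n - 1 - m := by
        intro t hts
        obtain ⟨htn, htJ⟩ := (hmem t).mp hts
        have hsub : insert t ((Finset.range t).filter (fun i => i ∉ J)) ⊆ s := by
          intro x hx
          rcases Finset.mem_insert.mp hx with rfl | hx'
          · exact (hmem x).mpr ⟨htn, htJ⟩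
          · simp only [Finset.mem_filter, Finset.mem_range] at hx'
            exact (hmem x).mpr ⟨by omega, hx'.2⟩
        have hni : t ∉ (Finset.range t).filter (fun i => i ∉ J) := by
          simp [Finset.mem_filter]
        have := Finset.card_le_card hsub
        rw [Finset.card_insert_of_notMem hni, F3] at this
        simp only [hg]
        omega
      have F5 : m ≤ n - 2 := by
        by_contra h
        have hcard : (Finset.range (n-1)).card ≤ J.card := by
          rw [Finset.card_range]; omega
        have hJeq : J = Finset.range (n-1) := Finset.eq_of_subset_of_card_le hJn hcard
        have h0 : 0 ∈ J := by rw [hJeq]; simp; omega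
        have h1 : 1 ∈ J := by rw [hJeq]; simp; omega
        exact hsp 0 h0 h1
      -- rewrite summands via the induction hypothesis
      have hsummand : ∀ t ∈ s,
          Nat.card (EL (t+1) (J1 J t)) * Nat.card (EL (n-1-t) (J2 J t)) =
            catalan (g t) * catalan ((n - 2 - m) - g t) := by
        intro t hts
        obtain ⟨htn, htJ⟩ := (hmem t).mp hts
        have hc1 : Nat.card (EL (t+1) (J1 J t)) = catalan (g t) := by
          rw [ih (t+1) (by omega) (J1 J t)
            (by intro i hi
                simp only [J1, Finset.mem_filter] at hi
                simp only [Finset.mem_range]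
                omega)
            (by intro i hi hcon
                simp only [J1, Finset.mem_filter] at hi hcon
                exact hsp i hi.1 hcon.1)]
          congr 1
          have := F1 t
          omega
        have hc2 : Nat.card (EL (n-1-t) (J2 J t)) = catalan ((n - 2 - m) - g t) := by
          rw [ih (n-1-t) (by omega) (J2 J t)
            (by intro i hi
                simp only [J2, Finset.mem_image, Finset.mem_filter] at hi
                obtain ⟨i₀, ⟨hi₀J, ht₀⟩, rfl⟩ := hi
                have := Finset.mem_range.mp (hJn hi₀J)
                simp only [Finset.mem_range]
                omega)
            (by intro i hi hcon
                simp only [J2, Finset.mem_image, Finset.mem_filter] at hi hcon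
                obtain ⟨i₀, ⟨hi₀J, ht₀⟩, hie⟩ := hi
                obtain ⟨i₁, ⟨hi₁J, ht₁⟩, hie'⟩ := hcon
                have : i₁ = i₀ + 1 := by omega
                exact hsp i₀ hi₀J (this ▸ hi₁J))]
          congr 1
          have e1 := F1 t
          have e2 := F2 t hts
          have e3 := F4 t hts
          have e4 := F1' t
          omega
        rw [hc1, hc2]
      rw [Finset.sum_congr rfl hsummand]
      -- reindex the sum along g
      have hginj : ∀ t ∈ s, ∀ u ∈ s, g t = g u → t = u := by
        have mono : ∀ t ∈ s, ∀ u ∈ s, t < u → g t < g u := by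
          intro t hts u hus htu
          obtain ⟨htn, htJ⟩ := (hmem t).mp hts
          have hsub : insert t ((Finset.range t).filter (fun i => i ∉ J)) ⊆
              (Finset.range u).filter (fun i => i ∉ J) := by
            intro x hx
            rcases Finset.mem_insert.mp hx with rfl | hx'
            · simp only [Finset.mem_filter, Finset.mem_range]
              exact ⟨htu, htJ⟩
            · simp only [Finset.mem_filter, Finset.mem_range] at hx' ⊢
              exact ⟨by omega, hx'.2⟩
          have hni : t ∉ (Finset.range t).filter (fun i => i ∉ J) := by
            simp [Finset.mem_filter]
          have := Finset.card_le_card hsub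
          rw [Finset.card_insert_of_notMem hni] at this
          simp only [hg]
          omega
        intro t hts u hus hgu
        rcases Nat.lt_trichotomy t u with h | h | h
        · have := mono t hts u hus h; omega
        · exact h
        · have := mono u hus t hts h; omega
      have himg : s.image g = Finset.range (n - 1 - m) := by
        apply Finset.eq_of_subset_of_card_le
        · intro x hx
          obtain ⟨t, hts, rfl⟩ := Finset.mem_image.mp hx
          exact Finset.mem_range.mpr (F4 t hts)
        · rw [Finset.card_range, Finset.card_image_of_injOn (fun t ht u hu => hginj t ht u hu),
            F3]
      have hre : ∑ t ∈ s, catalan (g t) * catalan ((n - 2 - m) - g t) =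
          ∑ x ∈ Finset.range (n - 1 - m), catalan x * catalan ((n - 2 - m) - x) := by
        rw [← himg, Finset.sum_image (fun t ht u hu => hginj t ht u hu)]
      rw [hre, show n - 1 - m = (n - 2 - m) + 1 from by omega, catalan_succ]
      exact Finset.sum_range _
section SetoidSide

variable {n : ℕ}

theorem TournEdge.ext_val {e e' : TournEdge n} (h1 : (e.1.1 : ℕ) = (e'.1.1 : ℕ))
    (h2 : (e.1.2 : ℕ) = (e'.1.2 : ℕ)) : e = e' := by
  apply Subtype.ext
  apply Prod.ext <;> apply Fin.ext <;> assumption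

theorem consecEdge_congr {i i' : ℕ} (h : i = i') (hi : i + 1 < n) (hi' : i' + 1 < n) :
    consecEdge i hi = consecEdge (n := n) i' hi' := by subst h; rfl

theorem te_eq_consecEdge {a b : Fin n} (hab : a < b) (hb : (b : ℕ) = (a : ℕ) + 1)
    (h : (a : ℕ) + 1 < n) : te a b hab = consecEdge (a : ℕ) h :=
  TournEdge.ext_val rfl hb

theorem reach {S : Setoid (TournEdge n)} (hT : IsTransitivePartition S) :
    ∀ (d : ℕ) (a b : Fin n) (hab : a < b), (b : ℕ) = (a : ℕ) + 1 + d →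
      ∃ k, ∃ hk : k + 1 < n, (a : ℕ) ≤ k ∧ k < (b : ℕ) ∧
        S.r (te a b hab) (consecEdge k hk) := by
  intro d
  induction d with
  | zero =>
    intro a b hab hd
    have hb := b.isLt
    have hk : (a : ℕ) + 1 < n := by omega
    refine ⟨a, hk, le_refl _, by omega, ?_⟩
    rw [te_eq_consecEdge hab (by omega) hk]
  | succ d ihd =>
    intro a b hab hd
    have hb := b.isLt
    have hj : (a : ℕ) + 1 < n := by omega
    set j : Fin n := ⟨(a : ℕ) + 1, hj⟩ with hjdef
    have haj : a < j := by rw [Fin.lt_def]; simp [hjdef]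
    have hjb : j < b := by rw [Fin.lt_def]; simp [hjdef]; omega
    rcases hT a j b haj hjb with hc | hc
    · refine ⟨a, hj, le_refl _, by omega, ?_⟩
      rw [te_eq_consecEdge haj (by simp [hjdef]) hj] at hc
      exact hc
    · obtain ⟨k, hk, h1, h2, h3⟩ := ihd j b hjb (by simp [hjdef]; omega)
      have h1' : (a : ℕ) ≤ k := by simp [hjdef] at h1; omega
      exact ⟨k, hk, h1', h2, S.iseqv.trans hc h3⟩

theorem reach' {S : Setoid (TournEdge n)} (hT : IsTransitivePartition S)
    {a b : ℕ} (hab : a < b) (hbn : b < n) :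
    ∃ k, ∃ hk : k + 1 < n, a ≤ k ∧ k < b ∧
      S.r (te ⟨a, hab.trans hbn⟩ ⟨b, hbn⟩ (Fin.mk_lt_mk.mpr hab)) (consecEdge k hk) :=
  reach hT (b - a - 1) ⟨a, hab.trans hbn⟩ ⟨b, hbn⟩ (Fin.mk_lt_mk.mpr hab) (by simp; omega)

theorem consec_inj {S : Setoid (TournEdge n)} (hT : IsTransitivePartition S)
    (hcard : Nat.card (Quotient S) = n - 1) :
    ∀ k k' (hk : k + 1 < n) (hk' : k' + 1 < n),
      S.r (consecEdge k hk) (consecEdge k' hk') → k = k' := by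
  have hsurj : Function.Surjective
      (fun k : Fin (n-1) => (⟦consecEdge k.1 (by omega)⟧ : Quotient S)) := by
    intro q
    obtain ⟨e, rfl⟩ := Quotient.exists_rep q
    obtain ⟨⟨a, b⟩, hab⟩ := e
    have hab' : (a : ℕ) < (b : ℕ) := Fin.lt_def.mp hab
    obtain ⟨k, hk, h1, h2, h3⟩ := reach' hT hab' b.isLt
    refine ⟨⟨k, by omega⟩, ?_⟩
    apply Quotient.sound
    have he : te ⟨(a:ℕ), hab'.trans b.isLt⟩ ⟨(b:ℕ), b.isLt⟩ (Fin.mk_lt_mk.mpr hab') =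
        (⟨(a, b), hab⟩ : TournEdge n) := TournEdge.ext_val rfl rfl
    rw [he] at h3
    exact S.iseqv.symm h3
  haveI : Finite (Quotient S) := Quotient.finite _
  have hbij := (Nat.bijective_iff_surjective_and_card
    (fun k : Fin (n-1) => (⟦consecEdge k.1 (by omega)⟧ : Quotient S))).mpr
    ⟨hsurj, by rw [Nat.card_eq_fintype_card, Fintype.card_fin, hcard]⟩
  intro k k' hk hk' hr
  have h1 : (⟨k, by omega⟩ : Fin (n-1)) = ⟨k', by omega⟩ := by
    apply hbij.1
    exact Quotient.sound hr
  exact congrArg Fin.val h1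

/-- The labelling function associated to a transitive partition. -/
noncomputable def setoidToL (S : Setoid (TournEdge n)) (hT : IsTransitivePartition S) :
    ℕ → ℕ → ℕ :=
  fun a b => if h : a < b ∧ b < n then Classical.choose (reach' hT h.1 h.2) else 0

theorem setoidToL_spec {S : Setoid (TournEdge n)} (hT : IsTransitivePartition S)
    {a b : ℕ} (h1 : a < b) (h2 : b < n) :
    ∃ hk : setoidToL S hT a b + 1 < n, a ≤ setoidToL S hT a b ∧ setoidToL S hT a b < b ∧
      S.r (te ⟨a, h1.trans h2⟩ ⟨b, h2⟩ (Fin.mk_lt_mk.mpr h1))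
        (consecEdge (setoidToL S hT a b) hk) := by
  rw [setoidToL, dif_pos (⟨h1, h2⟩ : a < b ∧ b < n)]
  exact Classical.choose_spec (reach' hT h1 h2)

theorem setoidToL_eq {S : Setoid (TournEdge n)} (hT : IsTransitivePartition S)
    (hcard : Nat.card (Quotient S) = n - 1) {a b k : ℕ} (h1 : a < b) (h2 : b < n)
    (hk : k + 1 < n)
    (hr : S.r (te ⟨a, h1.trans h2⟩ ⟨b, h2⟩ (Fin.mk_lt_mk.mpr h1)) (consecEdge k hk)) :
    setoidToL S hT a b = k := by
  obtain ⟨hk', _, _, hr'⟩ := setoidToL_spec hT h1 h2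
  exact consec_inj hT hcard _ _ hk' hk (S.iseqv.trans (S.iseqv.symm hr') hr)

end SetoidSide
section MainEquiv

variable {n : ℕ}

theorem setoidToL_NGood {S : Setoid (TournEdge n)} (hT : IsTransitivePartition S)
    (hcard : Nat.card (Quotient S) = n - 1) {J : Finset ℕ}
    (hsing : ∀ i ∈ J, ∀ h : i + 1 < n, IsSingletonBlock S (consecEdge i h)) :
    NGood n J (setoidToL S hT) := by
  refine ⟨?_, ?_, ?_, ?_⟩
  · intro a b h
    rw [setoidToL, dif_neg h]
  · intro i hi
    exact setoidToL_eq hT hcard (Nat.lt_succ_self i) hi hi (S.iseqv.refl _)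
  · intro i j k hij hjk hkn
    have hikn : i < k := hij.trans hjk
    rcases hT ⟨i, by omega⟩ ⟨j, by omega⟩ ⟨k, hkn⟩ (Fin.mk_lt_mk.mpr hij)
      (Fin.mk_lt_mk.mpr hjk) with hc | hc
    · left
      obtain ⟨hk', _, _, hr'⟩ := setoidToL_spec hT hij (hjk.trans hkn)
      exact setoidToL_eq hT hcard hikn hkn hk' (S.iseqv.trans hc hr')
    · right
      obtain ⟨hk', _, _, hr'⟩ := setoidToL_spec hT hjk hkn
      exact setoidToL_eq hT hcard hikn hkn hk' (S.iseqv.trans hc hr')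
  · intro i hiJ a b hab hbn hval
    obtain ⟨hk, _, _, hr⟩ := setoidToL_spec hT hab hbn
    subst hval
    have := hsing _ hiJ hk _ hr
    constructor
    · have := congrArg (fun e : TournEdge n => (e.1.1 : ℕ)) this
      simpa [te, consecEdge] using this
    · have := congrArg (fun e : TournEdge n => (e.1.2 : ℕ)) this
      simpa [te, consecEdge] using this

theorem setoidToL_ker {S : Setoid (TournEdge n)} (hT : IsTransitivePartition S)
    (hcard : Nat.card (Quotient S) = n - 1) (e f : TournEdge n) :
    S.r e f ↔ setoidToL S hT e.1.1 e.1.2 = setoidToL S hT f.1.1 f.1.2 := by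
  have hab_e : (e.1.1 : ℕ) < (e.1.2 : ℕ) := Fin.lt_def.mp e.2
  have hab_f : (f.1.1 : ℕ) < (f.1.2 : ℕ) := Fin.lt_def.mp f.2
  obtain ⟨hke, _, _, hre⟩ := setoidToL_spec hT hab_e e.1.2.isLt
  obtain ⟨hkf, _, _, hrf⟩ := setoidToL_spec hT hab_f f.1.2.isLt
  have hre' : S.r e (consecEdge (setoidToL S hT e.1.1 e.1.2) hke) := hre
  have hrf' : S.r f (consecEdge (setoidToL S hT f.1.1 f.1.2) hkf) := hrf
  constructor
  · intro h
    exact consec_inj hT hcard _ _ hke hkf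
      (S.iseqv.trans (S.iseqv.symm hre') (S.iseqv.trans h hrf'))
  · intro h
    refine S.iseqv.trans hre' ?_
    rw [consecEdge_congr h hke hkf]
    exact S.iseqv.symm hrf'

theorem main_card_eq (hn : 2 ≤ n) (J : Finset ℕ) (hJn : J ⊆ Finset.range (n-1)) :
    Nat.card {S : Setoid (TournEdge n) //
        IsTransitivePartition S ∧ Nat.card (Quotient S) = n - 1 ∧
        ∀ i ∈ J, ∀ h : i + 1 < n, IsSingletonBlock S (consecEdge i h)} =
      Nat.card (EL n J) := by
  apply Nat.card_congr
  refine Equiv.ofBijective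
    (fun x => ⟨setoidToL x.1 x.2.1, setoidToL_NGood x.2.1 x.2.2.1 x.2.2.2⟩) ⟨?_, ?_⟩
  · rintro ⟨S₁, hT₁, hc₁, hs₁⟩ ⟨S₂, hT₂, hc₂, hs₂⟩ hxy
    have hfun : setoidToL S₁ hT₁ = setoidToL S₂ hT₂ := congrArg Subtype.val hxy
    apply Subtype.ext
    apply Setoid.ext
    intro e f
    show S₁.r e f ↔ S₂.r e f
    rw [setoidToL_ker hT₁ hc₁ e f, setoidToL_ker hT₂ hc₂ e f, hfun]
  · rintro ⟨ℓ, hℓ⟩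
    set f : TournEdge n → ℕ := fun e => ℓ (e.1.1 : ℕ) (e.1.2 : ℕ) with hfdef
    set S : Setoid (TournEdge n) := Setoid.ker f with hSdef
    have hT : IsTransitivePartition S := by
      intro i j k hij hjk
      have h2 := hℓ.2.2.1 (i : ℕ) (j : ℕ) (k : ℕ) (Fin.lt_def.mp hij) (Fin.lt_def.mp hjk)
        k.isLt
      rcases h2 with hc | hc
      · left; exact hc
      · right; exact hc
    have hcard : Nat.card (Quotient S) = n - 1 := by
      rw [Nat.card_congr (Setoid.quotientKerEquivRange f)]
      have hrange : Set.range f = ↑(Finset.range (n-1)) := by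
        ext v
        simp only [Set.mem_range, Finset.coe_range, Set.mem_Iio]
        constructor
        · rintro ⟨e, rfl⟩
          have hab : (e.1.1 : ℕ) < (e.1.2 : ℕ) := Fin.lt_def.mp e.2
          have := hℓ.bounds (e.1.2 : ℕ) (e.1.1 : ℕ) hab e.1.2.isLt
          have := e.1.2.isLt
          simp only [hfdef]
          omega
        · intro hv
          refine ⟨consecEdge v (by omega), ?_⟩
          show ℓ v (v+1) = v
          exact hℓ.2.1 v (by omega)
      rw [hrange]
      rw [Nat.card_coe_set_eq, Set.ncard_coe_finset, Finset.card_range]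
    have hsing : ∀ i ∈ J, ∀ h : i + 1 < n, IsSingletonBlock S (consecEdge i h) := by
      intro i hiJ h e hre
      have hre' : ℓ (e.1.1 : ℕ) (e.1.2 : ℕ) = ℓ i (i+1) := hre
      rw [hℓ.2.1 i h] at hre'
      have hab : (e.1.1 : ℕ) < (e.1.2 : ℕ) := Fin.lt_def.mp e.2
      have := hℓ.2.2.2 i hiJ _ _ hab e.1.2.isLt hre'
      exact TournEdge.ext_val (by simp [consecEdge, te]; omega)
        (by simp [consecEdge, te]; omega)
    refine ⟨⟨S, hT, hcard, hsing⟩, ?_⟩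
    apply Subtype.ext
    show setoidToL S hT = ℓ
    funext a b
    by_cases h : a < b ∧ b < n
    · obtain ⟨hk, _, _, hr⟩ := setoidToL_spec (S := S) hT h.1 h.2
      have hr' : ℓ a b = ℓ (setoidToL S hT a b) (setoidToL S hT a b + 1) := hr
      rw [hℓ.2.1 _ hk] at hr'
      omega
    · rw [setoidToL, dif_neg h, hℓ.1 a b h]

end MainEquiv

/-- For `n ≥ 2` and `J ⊆ {0, …, n-2}` of size `m`, the number of maximal transitive
partitions `p` of the transitive tournament on `n` vertices (vertices labelled
`0, …, n-1`) with `J ⊆ Des(p)` equals the Catalan number `C_{n-m-1}` if `J` is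
sparse, and `0` otherwise.  Here `Des(p)` is the set of `i` such that the edge
`(i, i+1)` forms a singleton block of `p`. -/
theorem card_maximal_transitive_partitions_with_descents (n m : ℕ) (hn : 2 ≤ n)
    (J : Finset ℕ) (hJ : J ⊆ Finset.range (n - 1)) (hm : J.card = m) :
    (SparseSet J →
      Nat.card {S : Setoid (TournEdge n) //
          IsTransitivePartition S ∧ Nat.card (Quotient S) = n - 1 ∧
          ∀ i ∈ J, ∀ h : i + 1 < n, IsSingletonBlock S (consecEdge i h)} =
        catalan (n - m - 1)) ∧
    (¬ SparseSet J →
      Nat.card {S : Setoid (TournEdge n) //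
          IsTransitivePartition S ∧ Nat.card (Quotient S) = n - 1 ∧
          ∀ i ∈ J, ∀ h : i + 1 < n, IsSingletonBlock S (consecEdge i h)} =
        0) := by
  have hEq := main_card_eq hn J hJ
  constructor
  · intro hsp
    rw [hEq, EL_card n J hJ hsp, hm, show n - 1 - m = n - m - 1 from by omega]
  · intro hnsp
    rw [SparseSet] at hnsp
    push_neg at hnsp
    obtain ⟨i, hi, hi1⟩ := hnsp
    haveI := EL_empty_of_not_sparse n J hJ hi hi1
    rw [hEq]
    exact Nat.card_of_isEmpty
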